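/- Let X = GC(G, S, α) be a generalized Cayley graph and let K = {g ∈ G : α(g)·S = S}. Then X is unworthy (i.e., there exist two distinct vertices of X with exactly the same set of neighbours) if and only if K ≠ {1}. -/

import Mathlib

/-- The generalized Cayley graph `GC(G, S, α)`. -/
def GC {G : Type*} [Group G] (α : G ≃* G) (S : Set G)
    (h1 : ∀ x : G, α (α x) = x)
    (h2 : ∀ x : G, α x⁻¹ * x ∉ S)
    (h3 : ⇑α '' S⁻¹ = S) : SimpleGraph G where
  Adj x y := α x⁻¹ * y ∈ S
  symm := ⟨by
    intro x y hxy
    have hmem : (α x⁻¹ * y)⁻¹ ∈ S⁻¹ := by simpa [Set.mem_inv] using hxy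
    have himg : α ((α x⁻¹ * y)⁻¹) ∈ ⇑α '' S⁻¹ := Set.mem_image_of_mem _ hmem
    rw [h3] at himg
    simpa [mul_inv_rev, map_mul, map_inv, h1] using himg⟩
  loopless := ⟨fun x hx => h2 x hx⟩

lemma mem_image_mul {G : Type*} [Group G] (g z : G) (S : Set G) :
    z ∈ (fun s => g * s) '' S ↔ g⁻¹ * z ∈ S := by
  constructor
  · rintro ⟨s, hs, rfl⟩; simpa using hs
  · intro hz; exact ⟨g⁻¹ * z, hz, by group⟩

/-- A generalized Cayley graph `X = GC(G, S, α)` is unworthy (has two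
distinct vertices with the same neighbourhood) if and only if
`K = {g ∈ G : α(g)·S = S}` is nontrivial. -/
theorem stmt_17 {G : Type*} [Group G] (α : G ≃* G) (S : Set G)
    (h1 : ∀ x : G, α (α x) = x)
    (h2 : ∀ x : G, α x⁻¹ * x ∉ S)
    (h3 : ⇑α '' S⁻¹ = S) :
    (∃ x y : G, x ≠ y ∧
        ∀ z : G, (GC α S h1 h2 h3).Adj x z ↔ (GC α S h1 h2 h3).Adj y z) ↔
      {g : G | (fun s => α g * s) '' S = S} ≠ {1} := by
  have hAdj : ∀ x z : G, (GC α S h1 h2 h3).Adj x z ↔ (α x)⁻¹ * z ∈ S := by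
    intro x z
    show α x⁻¹ * z ∈ S ↔ _
    rw [map_inv]
  constructor
  · rintro ⟨x, y, hne, h⟩ hK
    have hg : y⁻¹ * x ∈ {g : G | (fun s => α g * s) '' S = S} := by
      show (fun s => α (y⁻¹ * x) * s) '' S = S
      ext z
      rw [mem_image_mul]
      have := (h (α y * z)).symm
      rw [hAdj, hAdj] at this
      simp only [inv_mul_cancel_left] at this
      have key : (α (y⁻¹ * x))⁻¹ * z = (α x)⁻¹ * (α y * z) := by
        simp [map_mul, map_inv, mul_assoc]
      rw [key]
      exact this.symm
    rw [hK] at hg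
    simp only [Set.mem_singleton_iff] at hg
    exact hne (inv_mul_eq_one.mp hg).symm
  · intro hK
    have h1mem : (1 : G) ∈ {g : G | (fun s => α g * s) '' S = S} := by
      show (fun s => α 1 * s) '' S = S
      simp
    have : ∃ g, g ∈ {g : G | (fun s => α g * s) '' S = S} ∧ g ≠ 1 := by
      by_contra hc
      push_neg at hc
      apply hK
      apply Set.eq_singleton_iff_unique_mem.mpr
      exact ⟨h1mem, fun g hg => hc g hg⟩
    obtain ⟨g, hg, hg1⟩ := this
    refine ⟨g, 1, hg1, fun z => ?_⟩
    rw [hAdj, hAdj]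
    simp only [map_one, inv_one, one_mul]
    have := hg
    rw [Set.mem_setOf_eq] at this
    conv_rhs => rw [← this, mem_image_mul]
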